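/- Let p be a positive odd integer with p > 1 and q an even integer with |q| > 1, gcd(p,q) = 1. Set ε_i = (−1)^⌊iq/p⌋ and τ = −∑_{i=1}^{p−1} i·ε_i. Then τ is not divisible by p. -/

import Mathlib

open Finset

/-- ε_i = (−1)^⌊iq/p⌋ -/
def eps (p q i : ℤ) : ℤ := ((-1 : ℤˣ) ^ ⌊(i * q : ℚ) / (p : ℚ)⌋ : ℤˣ)

/-- d(i) = ∑_{k=1}^{i} ε_k -/
noncomputable def dd (p q i : ℤ) : ℤ := ∑ k ∈ Finset.Icc 1 i, eps p q k

lemma aux_neg_one_zpow_even {n : ℤ} (h : Even n) : ((-1 : ℤˣ) ^ n) = 1 := by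
  obtain ⟨m, rfl⟩ := h
  rw [zpow_add]
  exact Int.units_mul_self _

lemma aux_neg_one_zpow_odd {n : ℤ} (h : Odd n) : ((-1 : ℤˣ) ^ n) = -1 := by
  obtain ⟨m, rfl⟩ := h
  rw [show 2 * m + 1 = m + m + 1 by ring, zpow_add, zpow_add, zpow_one,
    Int.units_mul_self, one_mul]

lemma aux_floor_int_div (p a : ℤ) (hp : 0 < p) : ⌊(a : ℚ) / (p : ℚ)⌋ = a / p := by
  obtain ⟨n, rfl⟩ : ∃ n : ℕ, (n : ℤ) = p := ⟨p.toNat, Int.toNat_of_nonneg hp.le⟩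
  rw [show ((n : ℤ) : ℚ) = (n : ℚ) by push_cast; ring]
  exact Rat.floor_intCast_div_natCast a n

/-- ε in terms of residues mod 2p -/
lemma eps_eq_emod (p q i : ℤ) (hp : 0 < p) :
    eps p q i = if (i * q) % (2 * p) < p then 1 else -1 := by
  have hfl : ⌊(i * q : ℚ) / (p : ℚ)⌋ = (i * q) / p := by
    rw [show ((i : ℚ) * (q : ℚ)) = ((i * q : ℤ) : ℚ) by push_cast; ring]
    exact aux_floor_int_div p (i * q) hp
  set a := i * q with ha
  set m := a % (2 * p) with hm
  have hm0 : 0 ≤ m := Int.emod_nonneg a (by omega)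
  have hm2 : m < 2 * p := Int.emod_lt_of_pos a (by omega)
  have hdecomp : a = m + (2 * (a / (2 * p))) * p := by
    have h := Int.emod_add_mul_ediv a (2 * p)
    linear_combination -h
  have hdiv : a / p = m / p + 2 * (a / (2 * p)) := by
    conv_lhs => rw [hdecomp]
    rw [Int.add_mul_ediv_right _ _ (by omega : p ≠ 0)]
  unfold eps
  rw [hfl, hdiv]
  by_cases h : m < p
  · have hz : m / p = 0 := Int.ediv_eq_zero_of_lt hm0 h
    rw [if_pos h, hz, zero_add, aux_neg_one_zpow_even ⟨a / (2 * p), by ring⟩]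
    rfl
  · have h1 : m / p = 1 := by
      have hd : m = (m - p) + 1 * p := by ring
      rw [hd, Int.add_mul_ediv_right _ _ (by omega : p ≠ 0),
        Int.ediv_eq_zero_of_lt (by omega) (by omega)]
      norm_num
    rw [if_neg h, h1, aux_neg_one_zpow_odd ⟨a / (2 * p), by ring⟩]
    rfl

lemma aux_sum_abs_Icc (n : ℕ) :
    ∑ j ∈ Finset.Icc (-(n : ℤ)) (n : ℤ), |j| = (n : ℤ) * (n + 1) := by
  induction n with
  | zero => simp
  | succ n ih =>
    have h : Finset.Icc (-((n : ℤ) + 1)) ((n : ℤ) + 1)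
        = insert (-((n : ℤ) + 1)) (insert ((n : ℤ) + 1) (Finset.Icc (-(n : ℤ)) (n : ℤ))) := by
      ext x
      simp only [Finset.mem_Icc, Finset.mem_insert]
      omega
    have h1 : (-((n : ℤ) + 1)) ∉ insert ((n : ℤ) + 1) (Finset.Icc (-(n : ℤ)) (n : ℤ)) := by
      simp only [Finset.mem_Icc, Finset.mem_insert]
      omega
    have h2 : ((n : ℤ) + 1) ∉ Finset.Icc (-(n : ℤ)) (n : ℤ) := by
      simp only [Finset.mem_Icc]
      omega
    push_cast
    rw [h, Finset.sum_insert h1, Finset.sum_insert h2, ih,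
      abs_of_nonpos (by omega), abs_of_nonneg (by omega : (0:ℤ) ≤ (n : ℤ) + 1)]
    ring

theorem stmt13 (p q : ℤ) (hp : 1 < p) (hpodd : Odd p) (hqeven : Even q)
    (hq : 1 < |q|) (hcop : IsCoprime p q) :
    ¬ (p ∣ (-∑ i ∈ Finset.Icc (1 : ℤ) (p - 1), i * eps p q i)) := by
  intro hdvd
  have hp0 : (0 : ℤ) < p := by omega
  obtain ⟨k, hk⟩ := hpodd
  have hk0 : 0 ≤ k := by omega
  obtain ⟨s, hs⟩ := hqeven
  have hdT : p ∣ ∑ i ∈ Finset.Icc (1 : ℤ) (p - 1), i * eps p q i := by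
    have := hdvd
    rwa [dvd_neg] at this
  -- the signed residue
  set r : ℤ → ℤ := fun i =>
    if (i * q) % (2 * p) < p then (i * q) % (2 * p) else (i * q) % (2 * p) - 2 * p with hr
  have hm_nonneg : ∀ i : ℤ, 0 ≤ (i * q) % (2 * p) := fun i => Int.emod_nonneg _ (by omega)
  have hm_lt : ∀ i : ℤ, (i * q) % (2 * p) < 2 * p := fun i => Int.emod_lt_of_pos _ (by omega)
  have hm_even : ∀ i : ℤ, Even ((i * q) % (2 * p)) := by
    intro i
    refine ⟨i * s - p * ((i * q) / (2 * p)), ?_⟩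
    rw [Int.emod_def, hs]
    ring
  have hm_ne_p : ∀ i : ℤ, (i * q) % (2 * p) ≠ p := by
    intro i h
    obtain ⟨t, ht⟩ := hm_even i
    omega
  have hm_ne : ∀ i ∈ Finset.Icc (1 : ℤ) (p - 1), (i * q) % (2 * p) ≠ 0 := by
    intro i hi h0
    rw [Finset.mem_Icc] at hi
    have h2 : (2 * p) ∣ i * q := Int.dvd_of_emod_eq_zero h0
    have hpd : p ∣ i * q := dvd_trans ⟨2, by ring⟩ h2
    have hpi : p ∣ i := hcop.dvd_of_dvd_mul_right hpd
    have := Int.le_of_dvd (by omega) hpi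
    omega
  -- congruence  p ∣ i*q - r i  (in fact 2p ∣)
  have hr_cong : ∀ i : ℤ, 2 * p ∣ (i * q - r i) := by
    intro i
    have h2 : (2 * p) ∣ (i * q - (i * q) % (2 * p)) :=
      ⟨(i * q) / (2 * p), by rw [Int.emod_def]; ring⟩
    simp only [hr]
    by_cases h : (i * q) % (2 * p) < p
    · simpa [h] using h2
    · rw [if_neg h]
      have he : i * q - ((i * q) % (2 * p) - 2 * p)
          = (i * q - (i * q) % (2 * p)) + 2 * p := by ring
      rw [he]
      exact dvd_add h2 ⟨1, by ring⟩
  -- membership of r i in the target set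
  have hr_mem : ∀ i ∈ Finset.Icc (1 : ℤ) (p - 1),
      r i ∈ (Finset.Ioo (-p) p).filter (fun x => Even x ∧ x ≠ 0) := by
    intro i hi
    have h0 := hm_ne i hi
    have h1 := hm_nonneg i
    have h2 := hm_lt i
    have h3 := hm_ne_p i
    obtain ⟨t, ht⟩ := hm_even i
    simp only [Finset.mem_filter, Finset.mem_Ioo, hr]
    by_cases h : (i * q) % (2 * p) < p
    · rw [if_pos h]
      exact ⟨⟨by omega, by omega⟩, ⟨t, ht⟩, by omega⟩
    · rw [if_neg h]
      exact ⟨⟨by omega, by omega⟩, ⟨t - p, by omega⟩, by omega⟩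
  -- termwise divisibility
  have hterm : ∀ i ∈ Finset.Icc (1 : ℤ) (p - 1),
      p ∣ (q * (i * eps p q i) - |r i|) := by
    intro i hi
    have h0 := hm_ne i hi
    have h1 := hm_nonneg i
    have h2 := hm_lt i
    have hc : p ∣ (i * q - r i) := dvd_trans ⟨2, by ring⟩ (hr_cong i)
    rw [eps_eq_emod p q i hp0]
    by_cases h : (i * q) % (2 * p) < p
    · have hrv : r i = (i * q) % (2 * p) := by simp only [hr]; rw [if_pos h]
      rw [if_pos h, abs_of_nonneg (by omega : (0:ℤ) ≤ r i)]
      have : q * (i * 1) - r i = i * q - r i := by ring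
      rwa [this]
    · have hrv : r i = (i * q) % (2 * p) - 2 * p := by simp only [hr]; rw [if_neg h]
      rw [if_neg h, abs_of_nonpos (by omega : r i ≤ 0)]
      have : q * (i * -1) - -(r i) = -(i * q - r i) := by ring
      rw [this]
      exact dvd_neg.mpr hc
  -- main bijection
  have hbij : ∑ i ∈ Finset.Icc (1 : ℤ) (p - 1), |r i|
      = ∑ x ∈ (Finset.Ioo (-p) p).filter (fun x => Even x ∧ x ≠ 0), |x| := by
    apply Finset.sum_bij (fun i _ => r i) hr_mem
    · -- injectivity
      intro a ha b hb hab
      rw [Finset.mem_Icc] at ha hb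
      have h1 := hr_cong a
      have h2 := hr_cong b
      have h3 : 2 * p ∣ (a - b) * q := by
        have he : (a - b) * q = (a * q - r a) - (b * q - r b) := by rw [hab]; ring
        rw [he]
        exact dvd_sub h1 h2
      have h4 : p ∣ (a - b) * q := dvd_trans ⟨2, by ring⟩ h3
      have h5 : p ∣ a - b := hcop.dvd_of_dvd_mul_right h4
      rcases h5 with ⟨c, hcc⟩
      rcases lt_trichotomy c 0 with h | h | h
      · have hm := mul_le_mul_of_nonneg_left (show c ≤ -1 by omega) hp0.le
        rw [mul_neg_one] at hm
        linarith [ha.1, ha.2, hb.1, hb.2]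
      · rw [h, mul_zero] at hcc
        omega
      · have hm := mul_le_mul_of_nonneg_left (show 1 ≤ c by omega) hp0.le
        rw [mul_one] at hm
        linarith [ha.1, ha.2, hb.1, hb.2]
    · -- surjectivity
      intro x hx
      simp only [Finset.mem_filter, Finset.mem_Ioo] at hx
      obtain ⟨⟨hx1, hx2⟩, ⟨y, hy⟩, hx0⟩ := hx
      have hcop2 : IsCoprime p s := by
        have : IsCoprime p (2 * s) := by rwa [show 2 * s = s + s by ring, ← hs]
        exact this.of_mul_right_right
      obtain ⟨u, w, huw⟩ := hcop2
      set i := (w * y) % p with hi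
      have hi0 : 0 ≤ i := Int.emod_nonneg _ (by omega)
      have hip : i < p := Int.emod_lt_of_pos _ hp0
      have hkey : p ∣ i * s - y := by
        refine ⟨-(y * u) - ((w * y) / p) * s, ?_⟩
        simp only [hi, Int.emod_def]
        linear_combination y * huw
      have hiq : 2 * p ∣ i * q - x := by
        obtain ⟨c, hc⟩ := hkey
        refine ⟨c, ?_⟩
        rw [hs, hy]
        linear_combination 2 * hc
      have hine : i ≠ 0 := by
        intro h0
        rw [h0] at hkey
        have hpy : p ∣ y := by
          have : p ∣ -(0 * s - y) := dvd_neg.mpr hkey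
          simpa using this
        have hy0 : y ≠ 0 := by omega
        have := Int.le_of_dvd (abs_pos.mpr hy0) ((dvd_abs p y).mpr hpy)
        rcases abs_cases y with ⟨e1, e2⟩ | ⟨e1, e2⟩ <;> omega
      refine ⟨i, Finset.mem_Icc.mpr ⟨by omega, by omega⟩, ?_⟩
      -- show r i = x
      have hmod : (i * q) % (2 * p) = x % (2 * p) := by
        obtain ⟨c, hc⟩ := hiq
        have : i * q = x + (2 * p) * c := by omega
        rw [this, Int.add_mul_emod_self_left]
      by_cases hxpos : 0 < x
      · have hxm : x % (2 * p) = x := Int.emod_eq_of_lt (by omega) (by omega)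
        simp only [hr]
        rw [hmod, hxm, if_pos (by omega)]
      · have hxneg : x < 0 := by omega
        have hxm : x % (2 * p) = x + 2 * p := by
          have h1 : (x + 2 * p) % (2 * p) = x % (2 * p) := by
            rw [show x + 2 * p = x + 2 * p * 1 by ring, Int.add_mul_emod_self_left]
          rw [← h1]
          exact Int.emod_eq_of_lt (by omega) (by omega)
        simp only [hr]
        rw [hmod, hxm, if_neg (by omega)]
        ring
    · intro a ha
      rfl
  -- compute the target sum
  have hS : (Finset.Ioo (-p) p).filter (fun x => Even x ∧ x ≠ 0)
      = ((Finset.Icc (-k) k).erase 0).image (fun j => 2 * j) := by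
    ext x
    simp only [Finset.mem_filter, Finset.mem_Ioo, Finset.mem_image, Finset.mem_erase,
      Finset.mem_Icc]
    constructor
    · rintro ⟨⟨h1, h2⟩, ⟨j, hj⟩, h3⟩
      exact ⟨j, ⟨by omega, by omega, by omega⟩, by omega⟩
    · rintro ⟨j, ⟨hj0, hj1, hj2⟩, rfl⟩
      exact ⟨⟨by omega, by omega⟩, ⟨j, by ring⟩, by omega⟩
  have hsum2 : ∑ x ∈ (Finset.Ioo (-p) p).filter (fun x => Even x ∧ x ≠ 0), |x|
      = 2 * (k * (k + 1)) := by
    rw [hS, Finset.sum_image (by intro a _ b _ h; have h' : 2 * a = 2 * b := h; omega)]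
    rw [Finset.sum_erase (f := fun j => |2 * j|) _ (by norm_num)]
    have habs : ∀ j ∈ Finset.Icc (-k) k, |2 * j| = 2 * |j| := by
      intro j _
      rw [abs_mul]
      norm_num
    rw [Finset.sum_congr rfl habs, ← Finset.mul_sum]
    obtain ⟨n, rfl⟩ : ∃ n : ℕ, (n : ℤ) = k := ⟨k.toNat, Int.toNat_of_nonneg hk0⟩
    rw [aux_sum_abs_Icc n]
  -- put it together
  have hsum1 : p ∣ (q * (∑ i ∈ Finset.Icc (1 : ℤ) (p - 1), i * eps p q i)
      - ∑ i ∈ Finset.Icc (1 : ℤ) (p - 1), |r i|) := by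
    rw [Finset.mul_sum, ← Finset.sum_sub_distrib]
    exact Finset.dvd_sum hterm
  have hqT : p ∣ q * (∑ i ∈ Finset.Icc (1 : ℤ) (p - 1), i * eps p q i) :=
    Dvd.dvd.mul_left hdT q
  have hfin : p ∣ 2 * (k * (k + 1)) := by
    rw [← hsum2, ← hbij]
    have := dvd_sub hqT hsum1
    simpa using this
  have hpp : p ∣ p * p - 1 := by
    have he : p * p - 1 = 2 * (2 * (k * (k + 1))) := by rw [hk]; ring
    rw [he]
    exact Dvd.dvd.mul_left hfin 2
  have hone : p ∣ 1 := by
    have := dvd_sub (dvd_mul_right p p) hpp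
    simpa using this
  have := Int.le_of_dvd one_pos hone
  omega
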